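/- Let n ≥ 3, 2 ≤ i_1 ≤ n−2, i_1 + 1 ≤ t_2 ≤ n−1, 1 ≤ i_2 with i_2 + t_2 ≤ n and i_1 + 1 + i_2 ≠ n. Define C_1 = ... = C_{i_1} = C_n = [n] \ {t_2+1,...,t_2+i_2}, C_{i_1+1} = ... = C_{i_1+i_2+1} = [n] \ [i_1], C_{i_1+i_2+2} = ... = C_{n−1} = [n] \ ([i_1] ∪ {t_2+1,...,t_2+i_2}). Then {Σ_{k=1}^n e_{j_k} : j_k ∈ C_k} = {α ∈ ℕ^n : |α| = n, α_1 + ... + α_{i_1} ≤ i_1 + 1, α_{t_2+1} + ... + α_{t_2+i_2} ≤ i_2 + 1}. -/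

import Mathlib

open Finset

lemma card_filter_fin' (n : ℕ) (p : ℕ → Prop) [DecidablePred p] :
    ((univ : Finset (Fin n)).filter (fun k => p k.val)).card
      = ((Finset.range n).filter p).card := by
  rw [Finset.card_filter, Finset.card_filter, ← Fin.sum_univ_eq_sum_range]

lemma sum_single_apply' {n : ℕ} (j : Fin n → Fin n) (m : Fin n) :
    (∑ k, Pi.single (j k) 1 : Fin n → ℕ) m
      = ((univ : Finset (Fin n)).filter (fun k => j k = m)).card := by
  rw [Finset.sum_apply, Finset.card_filter]
  refine Finset.sum_congr rfl fun k _ => ?_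
  simp [Pi.single_apply, eq_comm]

lemma card_filter_sigma' {n : ℕ} (α : Fin n → ℕ) (P : Fin n → Prop) [DecidablePred P] :
    ((univ : Finset (Σ m : Fin n, Fin (α m))).filter (fun x => P x.1)).card
      = ∑ m ∈ univ.filter P, α m := by
  rw [Finset.card_filter, ← Finset.univ_sigma_univ, Finset.sum_sigma, Finset.sum_filter]
  simp [apply_ite Finset.card]

lemma card_fiber_sum' {n : ℕ} (j : Fin n → Fin n) (T : Finset (Fin n)) :
    ∑ m ∈ T, ((univ : Finset (Fin n)).filter (fun k => j k = m)).card
      = ((univ : Finset (Fin n)).filter (fun k => j k ∈ T)).card := by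
  rw [Finset.card_eq_sum_card_fiberwise (f := j) (s := (univ : Finset (Fin n)).filter (fun k => j k ∈ T)) (t := T)
    (fun k hk => (Finset.mem_filter.mp hk).2)]
  refine Finset.sum_congr rfl fun m hm => ?_
  congr 1
  ext k
  simp only [Finset.mem_filter, Finset.mem_univ, true_and]
  constructor
  · rintro rfl; exact ⟨hm, rfl⟩
  · exact fun h => h.2

theorem stmt8 (n i1 i2 t2 : ℕ) (hn : 3 ≤ n) (hi1a : 2 ≤ i1) (hi1b : i1 ≤ n - 2)
    (ht2a : i1 + 1 ≤ t2) (ht2b : t2 ≤ n - 1) (hi2a : 1 ≤ i2)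
    (hsum : i2 + t2 ≤ n) (hne : i1 + 1 + i2 ≠ n)
    (C : Fin n → Set (Fin n))
    (hC : ∀ k : Fin n,
      C k = if k.val < i1 ∨ k.val = n - 1 then
              {m : Fin n | ¬ (t2 ≤ m.val ∧ m.val < t2 + i2)}
            else if k.val < i1 + i2 + 1 then {m : Fin n | i1 ≤ m.val}
            else {m : Fin n | i1 ≤ m.val ∧ ¬ (t2 ≤ m.val ∧ m.val < t2 + i2)}) :
    {α : Fin n → ℕ | ∃ j : Fin n → Fin n, (∀ k, j k ∈ C k) ∧ α = ∑ k, Pi.single (j k) 1} =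
    {α : Fin n → ℕ | ∑ k, α k = n ∧
      ∑ k ∈ Finset.univ.filter (fun m : Fin n => m.val < i1), α k ≤ i1 + 1 ∧
      ∑ k ∈ Finset.univ.filter (fun m : Fin n => t2 ≤ m.val ∧ m.val < t2 + i2), α k ≤ i2 + 1} := by
  classical
  have hn1 : i1 + 2 ≤ n := by omega
  have hn3 : i1 + i2 + 2 ≤ n := by omega
  -- cardinalities of the three slot classes
  have c1card : ((univ : Finset (Fin n)).filter
      (fun k => k.val < i1 ∨ k.val = n - 1)).card = i1 + 1 := by
    rw [card_filter_fin' n (fun v => v < i1 ∨ v = n - 1)]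
    have e : (Finset.range n).filter (fun v => v < i1 ∨ v = n - 1)
        = insert (n - 1) (Finset.range i1) := by
      ext v
      simp only [Finset.mem_filter, Finset.mem_range, Finset.mem_insert]
      omega
    rw [e, Finset.card_insert_of_notMem (by simp; omega), Finset.card_range]
  have c2card : ((univ : Finset (Fin n)).filter
      (fun k => ¬(k.val < i1 ∨ k.val = n - 1) ∧ k.val < i1 + i2 + 1)).card = i2 + 1 := by
    rw [card_filter_fin' n (fun v => ¬(v < i1 ∨ v = n - 1) ∧ v < i1 + i2 + 1)]
    have e : (Finset.range n).filter (fun v => ¬(v < i1 ∨ v = n - 1) ∧ v < i1 + i2 + 1)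
        = Finset.Ico i1 (i1 + i2 + 1) := by
      ext v
      simp only [Finset.mem_filter, Finset.mem_range, Finset.mem_Ico]
      omega
    rw [e, Nat.card_Ico]
    omega
  have c3card : ((univ : Finset (Fin n)).filter
      (fun k => ¬(k.val < i1 ∨ k.val = n - 1) ∧ ¬ k.val < i1 + i2 + 1)).card
      = n - (i1 + i2 + 2) := by
    rw [card_filter_fin' n (fun v => ¬(v < i1 ∨ v = n - 1) ∧ ¬ v < i1 + i2 + 1)]
    have e : (Finset.range n).filter (fun v => ¬(v < i1 ∨ v = n - 1) ∧ ¬ v < i1 + i2 + 1)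
        = Finset.Ico (i1 + i2 + 1) (n - 1) := by
      ext v
      simp only [Finset.mem_filter, Finset.mem_range, Finset.mem_Ico]
      omega
    rw [e, Nat.card_Ico]
    omega
  have c1ccard : ((univ : Finset (Fin n)).filter
      (fun k => ¬(k.val < i1 ∨ k.val = n - 1))).card = n - (i1 + 1) := by
    have h := Finset.card_filter_add_card_filter_not
      (s := (univ : Finset (Fin n))) (p := fun k => k.val < i1 ∨ k.val = n - 1)
    rw [c1card, Finset.card_univ, Fintype.card_fin] at h
    omega
  have c2ccard : ((univ : Finset (Fin n)).filter
      (fun k => ¬(¬(k.val < i1 ∨ k.val = n - 1) ∧ k.val < i1 + i2 + 1))).card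
      = n - (i2 + 1) := by
    have h := Finset.card_filter_add_card_filter_not
      (s := (univ : Finset (Fin n)))
      (p := fun k => ¬(k.val < i1 ∨ k.val = n - 1) ∧ k.val < i1 + i2 + 1)
    rw [c2card, Finset.card_univ, Fintype.card_fin] at h
    omega
  ext α
  simp only [Set.mem_setOf_eq]
  constructor
  · rintro ⟨j, hj, rfl⟩
    have hjA : ∀ k : Fin n, (j k).val < i1 → (k.val < i1 ∨ k.val = n - 1) := by
      intro k hk
      by_contra hc
      have h := hj k
      rw [hC k, if_neg hc] at h
      split_ifs at h with h2
      · simp only [Set.mem_setOf_eq] at h; omega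
      · simp only [Set.mem_setOf_eq] at h; omega
    have hjB : ∀ k : Fin n, (t2 ≤ (j k).val ∧ (j k).val < t2 + i2) →
        (¬(k.val < i1 ∨ k.val = n - 1) ∧ k.val < i1 + i2 + 1) := by
      intro k hk
      have h := hj k
      rw [hC k] at h
      split_ifs at h with h1 h2
      · simp only [Set.mem_setOf_eq] at h; exact absurd hk h
      · exact ⟨h1, h2⟩
      · simp only [Set.mem_setOf_eq] at h; exact absurd hk h.2
    refine ⟨?_, ?_, ?_⟩
    · simp only [sum_single_apply']
      rw [card_fiber_sum' j univ]
      simp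
    · simp only [sum_single_apply']
      rw [card_fiber_sum' j]
      calc ((univ : Finset (Fin n)).filter
            (fun k => j k ∈ univ.filter (fun m : Fin n => m.val < i1))).card
          ≤ ((univ : Finset (Fin n)).filter
            (fun k => k.val < i1 ∨ k.val = n - 1)).card := by
            apply Finset.card_le_card
            intro k hk
            simp only [Finset.mem_filter, Finset.mem_univ, true_and] at hk ⊢
            exact hjA k hk
        _ = i1 + 1 := c1card
    · simp only [sum_single_apply']
      rw [card_fiber_sum' j]
      calc ((univ : Finset (Fin n)).filter
            (fun k => j k ∈ univ.filter (fun m : Fin n => t2 ≤ m.val ∧ m.val < t2 + i2))).card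
          ≤ ((univ : Finset (Fin n)).filter
            (fun k => ¬(k.val < i1 ∨ k.val = n - 1) ∧ k.val < i1 + i2 + 1)).card := by
            apply Finset.card_le_card
            intro k hk
            simp only [Finset.mem_filter, Finset.mem_univ, true_and] at hk ⊢
            exact hjB k hk
        _ = i2 + 1 := c2card
  · rintro ⟨h1, hA, hB⟩
    -- sums over complements
    have hsplitA : (∑ m ∈ univ.filter (fun m : Fin n => m.val < i1), α m)
        + ∑ m ∈ univ.filter (fun m : Fin n => ¬ m.val < i1), α m = n := by
      rw [Finset.sum_filter_add_sum_filter_not]; exact h1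
    have hsplitB : (∑ m ∈ univ.filter (fun m : Fin n => t2 ≤ m.val ∧ m.val < t2 + i2), α m)
        + ∑ m ∈ univ.filter (fun m : Fin n => ¬(t2 ≤ m.val ∧ m.val < t2 + i2)), α m = n := by
      rw [Finset.sum_filter_add_sum_filter_not]; exact h1
    have hsplitAB : (∑ m ∈ univ.filter (fun m : Fin n => t2 ≤ m.val ∧ m.val < t2 + i2), α m)
        + ∑ m ∈ univ.filter
            (fun m : Fin n => ¬ m.val < i1 ∧ ¬(t2 ≤ m.val ∧ m.val < t2 + i2)), α m
        = ∑ m ∈ univ.filter (fun m : Fin n => ¬ m.val < i1), α m := by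
      have h2 := Finset.sum_filter_add_sum_filter_not
        ((univ : Finset (Fin n)).filter (fun m : Fin n => ¬ m.val < i1))
        (fun m : Fin n => t2 ≤ m.val ∧ m.val < t2 + i2) α
      rw [Finset.filter_filter, Finset.filter_filter] at h2
      have e1 : (univ : Finset (Fin n)).filter
          (fun m : Fin n => ¬ m.val < i1 ∧ (t2 ≤ m.val ∧ m.val < t2 + i2))
          = univ.filter (fun m : Fin n => t2 ≤ m.val ∧ m.val < t2 + i2) := by
        ext m
        simp only [Finset.mem_filter, Finset.mem_univ, true_and]
        omega
      rw [e1] at h2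
      exact h2
    -- Hall's condition
    set t : Fin n → Finset (Σ m : Fin n, Fin (α m)) :=
      fun k => univ.filter (fun x => x.1 ∈ C k) with ht
    have hsig : (univ : Finset (Σ m : Fin n, Fin (α m))).card = n := by
      rw [Finset.card_univ, Fintype.card_sigma]
      simpa using h1
    have hall : ∀ s : Finset (Fin n), s.card ≤ (s.biUnion t).card := by
      intro s
      by_cases hc1 : ∃ k ∈ s, (k.val < i1 ∨ k.val = n - 1)
      · obtain ⟨k1, hk1s, hk1⟩ := hc1
        have htk1 : t k1 = univ.filter
            (fun x : Σ m : Fin n, Fin (α m) => ¬(t2 ≤ x.1.val ∧ x.1.val < t2 + i2)) := by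
          rw [ht]
          ext x
          simp only [Finset.mem_filter, Finset.mem_univ, true_and, hC k1, if_pos hk1,
            Set.mem_setOf_eq]
        by_cases hc2 : ∃ k ∈ s, (¬(k.val < i1 ∨ k.val = n - 1) ∧ k.val < i1 + i2 + 1)
        · obtain ⟨k2, hk2s, hk2⟩ := hc2
          have huniv : (univ : Finset (Σ m : Fin n, Fin (α m))) ⊆ s.biUnion t := by
            intro x _
            rw [Finset.mem_biUnion]
            by_cases hx : t2 ≤ x.1.val ∧ x.1.val < t2 + i2
            · refine ⟨k2, hk2s, ?_⟩
              simp only [ht, Finset.mem_filter, Finset.mem_univ, true_and,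
                hC k2, if_neg hk2.1, if_pos hk2.2, Set.mem_setOf_eq]
              omega
            · refine ⟨k1, hk1s, ?_⟩
              rw [htk1]
              simp only [Finset.mem_filter, Finset.mem_univ, true_and]
              exact hx
          calc s.card ≤ (univ : Finset (Fin n)).card := Finset.card_le_univ s
            _ = n := by simp
            _ = (univ : Finset (Σ m : Fin n, Fin (α m))).card := hsig.symm
            _ ≤ (s.biUnion t).card := Finset.card_le_card huniv
        · have hc2' : ∀ k ∈ s, ¬(¬(k.val < i1 ∨ k.val = n - 1) ∧ k.val < i1 + i2 + 1) :=
            fun k hk h => hc2 ⟨k, hk, h⟩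
          have hs : s ⊆ univ.filter
              (fun k : Fin n => ¬(¬(k.val < i1 ∨ k.val = n - 1) ∧ k.val < i1 + i2 + 1)) := by
            intro k hk
            simp only [Finset.mem_filter, Finset.mem_univ, true_and]
            exact hc2' k hk
          have h6 : s.card ≤ n - (i2 + 1) :=
            le_trans (Finset.card_le_card hs) (le_of_eq c2ccard)
          have h7 := Finset.card_le_card (Finset.subset_biUnion_of_mem t hk1s)
          have h8 : (t k1).card
              = ∑ m ∈ univ.filter (fun m : Fin n => ¬(t2 ≤ m.val ∧ m.val < t2 + i2)), α m := by
            rw [htk1]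
            exact card_filter_sigma' α (fun m => ¬(t2 ≤ m.val ∧ m.val < t2 + i2))
          omega
      · have hc1' : ∀ k ∈ s, ¬(k.val < i1 ∨ k.val = n - 1) :=
          fun k hk h => hc1 ⟨k, hk, h⟩
        by_cases hc2 : ∃ k ∈ s, (¬(k.val < i1 ∨ k.val = n - 1) ∧ k.val < i1 + i2 + 1)
        · obtain ⟨k2, hk2s, hk2⟩ := hc2
          have hs : s ⊆ univ.filter (fun k : Fin n => ¬(k.val < i1 ∨ k.val = n - 1)) := by
            intro k hk
            simp only [Finset.mem_filter, Finset.mem_univ, true_and]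
            exact hc1' k hk
          have h6 : s.card ≤ n - (i1 + 1) :=
            le_trans (Finset.card_le_card hs) (le_of_eq c1ccard)
          have h7 := Finset.card_le_card (Finset.subset_biUnion_of_mem t hk2s)
          have h8 : (t k2).card
              = ∑ m ∈ univ.filter (fun m : Fin n => ¬ m.val < i1), α m := by
            have e : t k2
                = univ.filter (fun x : Σ m : Fin n, Fin (α m) => ¬ x.1.val < i1) := by
              rw [ht]
              ext x
              simp only [Finset.mem_filter, Finset.mem_univ, true_and,
                hC k2, if_neg hk2.1, if_pos hk2.2, Set.mem_setOf_eq]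
              omega
            rw [e]
            exact card_filter_sigma' α (fun m => ¬ m.val < i1)
          omega
        · rcases s.eq_empty_or_nonempty with rfl | ⟨k0, hk0s⟩
          · simp
          have hc2' : ∀ k ∈ s, ¬(¬(k.val < i1 ∨ k.val = n - 1) ∧ k.val < i1 + i2 + 1) :=
            fun k hk h => hc2 ⟨k, hk, h⟩
          have hk0a : ¬(k0.val < i1 ∨ k0.val = n - 1) := hc1' k0 hk0s
          have hk0b : ¬ k0.val < i1 + i2 + 1 := fun h => hc2' k0 hk0s ⟨hk0a, h⟩
          have hs : s ⊆ univ.filter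
              (fun k : Fin n => ¬(k.val < i1 ∨ k.val = n - 1) ∧ ¬ k.val < i1 + i2 + 1) := by
            intro k hk
            simp only [Finset.mem_filter, Finset.mem_univ, true_and]
            exact ⟨hc1' k hk, fun h => hc2' k hk ⟨hc1' k hk, h⟩⟩
          have h6 : s.card ≤ n - (i1 + i2 + 2) :=
            le_trans (Finset.card_le_card hs) (le_of_eq c3card)
          have h7 := Finset.card_le_card (Finset.subset_biUnion_of_mem t hk0s)
          have h8 : (t k0).card
              = ∑ m ∈ univ.filter
                  (fun m : Fin n => ¬ m.val < i1 ∧ ¬(t2 ≤ m.val ∧ m.val < t2 + i2)), α m := by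
            have e : t k0
                = univ.filter (fun x : Σ m : Fin n, Fin (α m) =>
                    ¬ x.1.val < i1 ∧ ¬(t2 ≤ x.1.val ∧ x.1.val < t2 + i2)) := by
              rw [ht]
              ext x
              simp only [Finset.mem_filter, Finset.mem_univ, true_and,
                hC k0, if_neg hk0a, if_neg hk0b, Set.mem_setOf_eq]
              omega
            rw [e]
            exact card_filter_sigma' α
              (fun m => ¬ m.val < i1 ∧ ¬(t2 ≤ m.val ∧ m.val < t2 + i2))
          omega
    obtain ⟨f, hfinj, hft⟩ := (Finset.all_card_le_biUnion_card_iff_exists_injective t).mp hall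
    have hfbij : Function.Bijective f := by
      rw [Fintype.bijective_iff_injective_and_card]
      refine ⟨hfinj, ?_⟩
      rw [Fintype.card_fin, Fintype.card_sigma]
      simpa using h1.symm
    refine ⟨fun k => (f k).1, fun k => ?_, ?_⟩
    · have h := hft k
      rw [ht] at h
      exact (Finset.mem_filter.mp h).2
    · funext m
      rw [sum_single_apply']
      have hb : ((univ : Finset (Fin n)).filter (fun k => (f k).1 = m)).card
          = ((univ : Finset (Σ m' : Fin n, Fin (α m'))).filter (fun x => x.1 = m)).card := by
        apply Finset.card_bij (fun k _ => f k)
        · intro k hk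
          simp only [Finset.mem_filter, Finset.mem_univ, true_and] at hk ⊢
          exact hk
        · intro a _ b _ hab
          exact hfinj hab
        · intro x hx
          obtain ⟨k, rfl⟩ := hfbij.2 x
          refine ⟨k, ?_, rfl⟩
          simpa using hx
      have e3 : ((univ : Finset (Σ m' : Fin n, Fin (α m'))).filter (fun x => x.1 = m)).card
          = α m := by
        rw [card_filter_sigma' α (fun x => x = m)]
        have e : (univ : Finset (Fin n)).filter (fun x => x = m) = {m} := by
          ext x; simp
        rw [e, Finset.sum_singleton]
      rw [hb, e3]
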